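/- For every real β with −2/e < β < 0, the equation β·κ + 2·Real.log κ = 0 has exactly two solutions in (0, ∞), say κ₁ < κ₂, and they satisfy 1 < κ₁ < e < κ₂; moreover κ₁ is a strict local minimizer and κ₂ is a strict local maximizer of the function g(κ) = β·κ + (Real.log κ)² on (0, ∞). -/

import Mathlib

open Real Set


/-- For `−2/e < β < 0` (easy sample), the equation `β·κ + 2·log κ = 0` has
exactly two solutions `κ₁ < κ₂` in `(0, ∞)`, with `1 < κ₁ < e < κ₂`;
moreover `κ₁` is a strict local minimizer and `κ₂` a strict local maximizer
of `g(κ) = β·κ + (log κ)²` on `(0, ∞)`. -/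
theorem crucial_optimal_confidence_easy (β : ℝ)
    (h₁ : -2 / Real.exp 1 < β) (h₂ : β < 0) :
    ∃ κ₁ κ₂ : ℝ,
      κ₁ < κ₂ ∧
      1 < κ₁ ∧ κ₁ < Real.exp 1 ∧ Real.exp 1 < κ₂ ∧
      (0 < κ₁ ∧ β * κ₁ + 2 * Real.log κ₁ = 0) ∧
      (0 < κ₂ ∧ β * κ₂ + 2 * Real.log κ₂ = 0) ∧
      (∀ κ : ℝ, 0 < κ → β * κ + 2 * Real.log κ = 0 → κ = κ₁ ∨ κ = κ₂) ∧
      (∃ δ > (0 : ℝ), ∀ κ : ℝ, 0 < κ → |κ - κ₁| < δ → κ ≠ κ₁ →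
        β * κ₁ + (Real.log κ₁) ^ 2 < β * κ + (Real.log κ) ^ 2) ∧
      (∃ δ > (0 : ℝ), ∀ κ : ℝ, 0 < κ → |κ - κ₂| < δ → κ ≠ κ₂ →
        β * κ + (Real.log κ) ^ 2 < β * κ₂ + (Real.log κ₂) ^ 2) := by
  have hβ : 0 < -β := by linarith
  have he : (0:ℝ) < Real.exp 1 := Real.exp_pos 1
  set h : ℝ → ℝ := fun κ => β * κ + 2 * Real.log κ with hhdef
  set g : ℝ → ℝ := fun κ => β * κ + (Real.log κ) ^ 2 with hgdef
  set m : ℝ := 2 / (-β) with hmdef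
  have hmpos : 0 < m := by positivity
  have hb2 : -2 < β * Real.exp 1 := by
    have := (div_lt_iff₀ he).mp h₁
    linarith
  have hem : Real.exp 1 < m := by
    rw [hmdef, lt_div_iff₀ hβ]
    have heq : Real.exp 1 * -β = -(β * Real.exp 1) := by ring
    rw [heq]; linarith
  -- derivative of h
  have hderiv : ∀ x : ℝ, 0 < x → HasDerivAt h (β + 2 * x⁻¹) x := by
    intro x hx
    have h1 : HasDerivAt (fun y : ℝ => β * y) (β * 1) x := (hasDerivAt_id x).const_mul β
    have h2 : HasDerivAt (fun y : ℝ => 2 * Real.log y) (2 * x⁻¹) x :=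
      (Real.hasDerivAt_log hx.ne').const_mul 2
    have h3 := h1.add h2; rw [mul_one] at h3; exact h3
  have hcont : ContinuousOn h (Ioi (0:ℝ)) := by
    intro x hx
    exact ((hderiv x hx).continuousAt).continuousWithinAt
  -- monotonicity of h
  have hmono : StrictMonoOn h (Ioc 0 m) := by
    apply strictMonoOn_of_deriv_pos (convex_Ioc 0 m)
      (hcont.mono (fun x hx => hx.1))
    intro x hx
    rw [interior_Ioc] at hx
    rw [(hderiv x hx.1).deriv]
    have : 2 * m⁻¹ < 2 * x⁻¹ := by
      apply mul_lt_mul_of_pos_left _ (by norm_num)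
      exact inv_strictAnti₀ hx.1 hx.2
    have hminv : m⁻¹ = -β / 2 := by rw [hmdef]; field_simp
    rw [hminv] at this
    linarith
  have hanti : StrictAntiOn h (Ici m) := by
    apply strictAntiOn_of_deriv_neg (convex_Ici m)
      (hcont.mono (fun x hx => lt_of_lt_of_le hmpos hx))
    intro x hx
    rw [interior_Ici] at hx
    rw [(hderiv x (hmpos.trans hx)).deriv]
    have : 2 * x⁻¹ < 2 * m⁻¹ := by
      apply mul_lt_mul_of_pos_left _ (by norm_num)
      exact inv_strictAnti₀ hmpos hx
    have hminv : m⁻¹ = -β / 2 := by rw [hmdef]; field_simp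
    rw [hminv] at this
    linarith
  -- values of h
  have h1v : h 1 = β := by simp [hhdef]
  have hev : h (Real.exp 1) = β * Real.exp 1 + 2 := by simp [hhdef, Real.log_exp]
  have hevpos : 0 < h (Real.exp 1) := by
    rw [hev]
    have : -2 / Real.exp 1 * Real.exp 1 < β * Real.exp 1 :=
      mul_lt_mul_of_pos_right h₁ he
    have h2 : -2 / Real.exp 1 * Real.exp 1 = -2 := by field_simp
    linarith [h2 ▸ this]
  have hmv : 0 < h m := by
    have hlm : 1 < Real.log m := by
      calc 1 = Real.log (Real.exp 1) := (Real.log_exp 1).symm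
        _ < Real.log m := Real.log_lt_log he hem
    have : h m = β * m + 2 * Real.log m := rfl
    have hbm : β * m = -2 := by rw [hmdef]; field_simp; rw [div_self h₂.ne]
    rw [this, hbm]; linarith
  -- κ₁ existence via IVT on [1, e]
  have hivt1 : (0:ℝ) ∈ Ioo (h 1) (h (Real.exp 1)) := by
    constructor
    · rw [h1v]; exact h₂
    · exact hevpos
  have h1e : (1:ℝ) < Real.exp 1 := by
    have := Real.exp_one_gt_d9; linarith
  obtain ⟨κ₁, hκ₁mem, hκ₁zero⟩ :=
    intermediate_value_Ioo h1e.le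
      (hcont.mono (fun x hx => lt_of_lt_of_le one_pos hx.1)) hivt1
  have hκ₁pos : 0 < κ₁ := lt_trans one_pos hκ₁mem.1
  -- K far right with h K < 0
  set K : ℝ := m + 16 / β ^ 2 with hKdef
  have hβ2 : (0:ℝ) < β ^ 2 := by nlinarith
  have h16 : (0:ℝ) < 16 / β ^ 2 := div_pos (by norm_num) hβ2
  have hKm : m < K := by
    show m < m + 16 / β ^ 2
    linarith
  have hKpos : 0 < K := hmpos.trans hKm
  have hKneg : h K < 0 := by
    have hsK : 0 < Real.sqrt K := Real.sqrt_pos.mpr hKpos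
    have hlog : Real.log K ≤ 2 * Real.sqrt K := by
      have := Real.log_le_sub_one_of_pos hsK
      have hls : Real.log (Real.sqrt K) = Real.log K / 2 := Real.log_sqrt hKpos.le
      rw [hls] at this
      linarith [hsK]
    have hK16 : 16 / β ^ 2 < K := by
      show 16 / β ^ 2 < m + 16 / β ^ 2
      linarith
    have hsKlb : 4 / (-β) < Real.sqrt K := by
      have h4 : (0:ℝ) ≤ 4 / (-β) := by positivity
      have hsq : (4 / (-β)) ^ 2 < K := by
        have heq : (4 / (-β)) ^ 2 = 16 / β ^ 2 := by
          field_simp; norm_num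
        rw [heq]; exact hK16
      exact (Real.lt_sqrt h4).mpr hsq
    have hβsK : β * Real.sqrt K < -4 := by
      have h4' : 4 < Real.sqrt K * -β := (div_lt_iff₀ hβ).mp hsKlb
      nlinarith
    have hBK : β * K + 4 * Real.sqrt K < 0 := by
      nlinarith [mul_lt_mul_of_pos_right hβsK hsK, Real.sq_sqrt hKpos.le]
    have hKe : h K = β * K + 2 * Real.log K := rfl
    rw [hKe]
    nlinarith [hlog, hBK]
  -- κ₂ existence via IVT on [m, K]
  have hivt2 : (0:ℝ) ∈ Ioo (h K) (h m) := ⟨hKneg, hmv⟩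
  obtain ⟨κ₂, hκ₂mem, hκ₂zero⟩ :=
    intermediate_value_Ioo' hKm.le (hcont.mono (fun x hx => hmpos.trans_le hx.1)) hivt2
  have hκ₂pos : 0 < κ₂ := hmpos.trans hκ₂mem.1
  have hκ₁ltm : κ₁ < m := hκ₁mem.2.trans hem
  have hκ₁κ₂ : κ₁ < κ₂ := hκ₁ltm.trans hκ₂mem.1
  have heκ₂ : Real.exp 1 < κ₂ := hem.trans hκ₂mem.1
  -- uniqueness
  have huniq : ∀ κ : ℝ, 0 < κ → h κ = 0 → κ = κ₁ ∨ κ = κ₂ := by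
    intro κ hκ hκz
    rcases le_or_gt κ m with hle | hgt
    · left
      exact hmono.injOn ⟨hκ, hle⟩ ⟨hκ₁pos, hκ₁ltm.le⟩ (hκz.trans hκ₁zero.symm)
    · right
      exact hanti.injOn (le_of_lt hgt) hκ₂mem.1.le (hκz.trans hκ₂zero.symm)
  -- sign of h between zeros
  have hsign_lt : ∀ x, 0 < x → x < κ₁ → h x < 0 := by
    intro x hx hxκ
    have := hmono ⟨hx, (hxκ.trans hκ₁ltm).le⟩ ⟨hκ₁pos, hκ₁ltm.le⟩ hxκ
    rw [hκ₁zero] at this; exact this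
  have hsign_mid : ∀ x, κ₁ < x → x < κ₂ → 0 < h x := by
    intro x hx1 hx2
    rcases le_or_gt x m with hle | hgt
    · have := hmono ⟨hκ₁pos, hκ₁ltm.le⟩ ⟨hκ₁pos.trans hx1, hle⟩ hx1
      rw [hκ₁zero] at this; exact this
    · have := hanti hgt.le hκ₂mem.1.le hx2
      rw [hκ₂zero] at this; exact this
  have hsign_gt : ∀ x, κ₂ < x → h x < 0 := by
    intro x hx
    have := hanti hκ₂mem.1.le (hκ₂mem.1.trans hx).le hx
    rw [hκ₂zero] at this; exact this
  -- derivative of g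
  have gderiv : ∀ x : ℝ, 0 < x → HasDerivAt g (h x / x) x := by
    intro x hx
    have h1 : HasDerivAt (fun y : ℝ => β * y) (β * 1) x := (hasDerivAt_id x).const_mul β
    have h2 : HasDerivAt (fun y : ℝ => (Real.log y) ^ 2)
        ((2 : ℕ) * (Real.log x) ^ 1 * x⁻¹) x := (Real.hasDerivAt_log hx.ne').pow 2
    have := h1.add h2
    have heq : β * 1 + (2:ℕ) * Real.log x ^ 1 * x⁻¹ = h x / x := by
      have : h x = β * x + 2 * Real.log x := rfl
      field_simp [this]
      rw [this]; norm_num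
    rw [heq] at this
    exact this
  have gcont : ContinuousOn g (Ioi (0:ℝ)) := by
    intro x hx
    exact ((gderiv x hx).continuousAt).continuousWithinAt
  -- monotonicity of g
  have ganti1 : StrictAntiOn g (Ioc 0 κ₁) := by
    apply strictAntiOn_of_deriv_neg (convex_Ioc 0 κ₁) (gcont.mono (fun x hx => hx.1))
    intro x hx
    rw [interior_Ioc] at hx
    rw [(gderiv x hx.1).deriv]
    exact div_neg_of_neg_of_pos (hsign_lt x hx.1 hx.2) hx.1
  have gmono : StrictMonoOn g (Icc κ₁ κ₂) := by
    apply strictMonoOn_of_deriv_pos (convex_Icc κ₁ κ₂)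
      (gcont.mono (fun x hx => hκ₁pos.trans_le hx.1))
    intro x hx
    rw [interior_Icc] at hx
    rw [(gderiv x (hκ₁pos.trans hx.1)).deriv]
    exact div_pos (hsign_mid x hx.1 hx.2) (hκ₁pos.trans hx.1)
  have ganti2 : StrictAntiOn g (Ici κ₂) := by
    apply strictAntiOn_of_deriv_neg (convex_Ici κ₂)
      (gcont.mono (fun x hx => hκ₂pos.trans_le hx))
    intro x hx
    rw [interior_Ici] at hx
    rw [(gderiv x (hκ₂pos.trans hx)).deriv]
    exact div_neg_of_neg_of_pos (hsign_gt x hx) (hκ₂pos.trans hx)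
  refine ⟨κ₁, κ₂, hκ₁κ₂, hκ₁mem.1, hκ₁mem.2, heκ₂, ⟨hκ₁pos, hκ₁zero⟩,
    ⟨hκ₂pos, hκ₂zero⟩, huniq, ?_, ?_⟩
  · refine ⟨min κ₁ (κ₂ - κ₁), lt_min hκ₁pos (by linarith), ?_⟩
    intro κ hκ hκd hκne
    have : g κ₁ < g κ := by
      rcases lt_or_gt_of_ne hκne with hlt | hgt
      · exact ganti1 ⟨hκ, hlt.le⟩ ⟨hκ₁pos, le_refl κ₁⟩ hlt
      · have hκle : κ ≤ κ₂ := by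
          have habs := abs_lt.mp hκd
          have hmin := min_le_right κ₁ (κ₂ - κ₁)
          linarith [habs.1, habs.2, hmin]
        exact gmono ⟨le_refl κ₁, hκ₁κ₂.le⟩ ⟨hgt.le, hκle⟩ hgt
    simpa [hgdef] using this
  · refine ⟨κ₂ - κ₁, by linarith, ?_⟩
    intro κ hκ hκd hκne
    have : g κ < g κ₂ := by
      rcases lt_or_gt_of_ne hκne with hlt | hgt
      · have hκge : κ₁ ≤ κ := by
          have := abs_lt.mp hκd
          linarith [this.1]
        exact gmono ⟨hκge, hlt.le⟩ ⟨hκ₁κ₂.le, le_refl κ₂⟩ hlt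
      · exact ganti2 (le_refl κ₂) hgt.le hgt
    simpa [hgdef] using this
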